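/- The Armijo line search in the gradient method terminates: if J : ℝᵖ → ℝ is continuously differentiable at q with ∇J(q) ≠ 0, γ ∈ (0, 1/2), β ∈ (0,1), then there exists l ∈ ℕ such that J(q - βˡ∇J(q)) ≤ J(q) - γβˡ‖∇J(q)‖². -/
import Mathlib


/-- Termination of the Armijo line search: if `J` is differentiable at `q` with
`∇J(q) ≠ 0`, `γ ∈ (0,1/2)`, `β ∈ (0,1)`, then there exists `l ∈ ℕ` with
`J(q - βˡ∇J(q)) ≤ J(q) - γβˡ‖∇J(q)‖²`. -/
theorem armijo_terminates {p : ℕ}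
    (J : EuclideanSpace ℝ (Fin p) → ℝ) (q : EuclideanSpace ℝ (Fin p))
    (hJ : DifferentiableAt ℝ J q) (hg : gradient J q ≠ 0)
    (γ β : ℝ) (hγ : γ ∈ Set.Ioo (0 : ℝ) (1/2)) (hβ : β ∈ Set.Ioo (0 : ℝ) 1) :
    ∃ l : ℕ, J (q - β ^ l • gradient J q)
      ≤ J q - γ * β ^ l * ‖gradient J q‖ ^ 2 := by
  set g := gradient J q with hgdef
  set f : ℝ → ℝ := fun t => J (q - t • g) with hfdef
  have hpath : HasDerivAt (fun t : ℝ => q - t • g) (-g) 0 := by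
    simpa using ((hasDerivAt_id (0:ℝ)).smul_const g).const_sub q
  have hF : HasFDerivAt J ((InnerProductSpace.toDual ℝ _) g) q :=
    hJ.hasGradientAt
  have hF' : HasFDerivAt J ((InnerProductSpace.toDual ℝ _) g)
      ((fun t : ℝ => q - t • g) 0) := by simpa using hF
  have hval : (InnerProductSpace.toDual ℝ _ g) (-g) = -‖g‖ ^ 2 := by
    rw [InnerProductSpace.toDual_apply_apply, inner_neg_right,
      real_inner_self_eq_norm_sq]
  have hderiv : HasDerivAt f (-‖g‖ ^ 2) 0 := by
    have h2 := hF'.comp_hasDerivAt (0:ℝ) hpath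
    rw [hval] at h2
    exact h2
  have hslope : Filter.Tendsto (slope f 0) (nhdsWithin 0 {(0:ℝ)}ᶜ)
      (nhds (-‖g‖ ^ 2)) := hasDerivAt_iff_tendsto_slope.mp hderiv
  have hgpos : 0 < ‖g‖ ^ 2 := pow_pos (norm_pos_iff.mpr hg) 2
  have hlt : -‖g‖ ^ 2 < -γ * ‖g‖ ^ 2 := by nlinarith [hγ.1, hγ.2]
  have hev : ∀ᶠ t in nhdsWithin 0 {(0:ℝ)}ᶜ, slope f 0 t < -γ * ‖g‖ ^ 2 :=
    hslope.eventually_lt_const hlt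
  -- β^l tends to 0 within the punctured neighborhood
  have hβ0 : Filter.Tendsto (fun l : ℕ => β ^ l) Filter.atTop (nhds 0) :=
    tendsto_pow_atTop_nhds_zero_of_lt_one hβ.1.le hβ.2
  have hβpos : ∀ l : ℕ, 0 < β ^ l := fun l => pow_pos hβ.1 l
  have hβ0' : Filter.Tendsto (fun l : ℕ => β ^ l) Filter.atTop
      (nhdsWithin 0 {(0:ℝ)}ᶜ) := by
    refine tendsto_nhdsWithin_of_tendsto_nhds_of_eventually_within _ hβ0 ?_
    exact Filter.Eventually.of_forall fun l => (hβpos l).ne'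
  have hevl : ∀ᶠ l : ℕ in Filter.atTop,
      slope f 0 (β ^ l) < -γ * ‖g‖ ^ 2 := hβ0'.eventually hev
  obtain ⟨l, hl⟩ := hevl.exists
  refine ⟨l, ?_⟩
  have hf0 : f 0 = J q := by simp [hfdef]
  have hslope_eq : slope f 0 (β ^ l) = (f (β ^ l) - J q) / β ^ l := by
    simp [slope_def_field, hf0]
  rw [hslope_eq] at hl
  have := (div_lt_iff₀ (hβpos l)).mp hl
  have : f (β ^ l) ≤ J q - γ * β ^ l * ‖g‖ ^ 2 := by nlinarith
  simpa [hfdef] using this
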